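/- arXiv:1702.07605 — 5 statements merged into one kernel-verified Lean document; each statement's English description precedes it below -/
import Mathlib

section
/- A proper distance-2 coloring of a finite simple graph G exists using, at each vertex v, a color from the range [1, Δ(v)² + 1], where Δ(v) is the maximum degree among v and its neighbors. That is, there is a coloring c : V → ℕ with c(v) ≤ Δ(v)² + 1 for all v, such that any two distinct vertices at distance at most 2 receive distinct colors. -/
open Finset

namespace Stmt1Aux

variable {V : Type*} [Fintype V] [DecidableEq V] (G : SimpleGraph V) [DecidableRel G.Adj]

def D (v : V) : ℕ := (insert v (G.neighborFinset v)).sup fun x => G.degree x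

def N2 (v : V) : Finset V :=
  Finset.univ.filter fun u => u ≠ v ∧ (G.Adj v u ∨ ∃ x, G.Adj v x ∧ G.Adj x u)

lemma mem_N2 {v u : V} : u ∈ N2 G v ↔ u ≠ v ∧ (G.Adj v u ∨ ∃ x, G.Adj v x ∧ G.Adj x u) := by
  simp [N2]

lemma card_N2_le (v : V) : (N2 G v).card ≤ D G v ^ 2 := by
  have hsub : N2 G v ⊆ (G.neighborFinset v).biUnion
      (fun x => insert x (G.neighborFinset x \ {v})) := by
    intro u hu
    rw [mem_N2] at hu
    obtain ⟨hne, hadj | ⟨x, hvx, hxu⟩⟩ := hu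
    · exact mem_biUnion.2 ⟨u, by simpa using hadj, mem_insert_self _ _⟩
    · exact mem_biUnion.2 ⟨x, by simpa using hvx,
        mem_insert.2 (Or.inr (by simp [hxu, hne]))⟩
  calc (N2 G v).card ≤ _ := card_le_card hsub
    _ ≤ ∑ x ∈ G.neighborFinset v, (insert x (G.neighborFinset x \ {v})).card :=
        card_biUnion_le
    _ ≤ ∑ _x ∈ G.neighborFinset v, D G v := by
        refine sum_le_sum fun x hx => ?_
        have hvx : G.Adj v x := by simpa using hx
        have hv : v ∈ G.neighborFinset x := by simpa using hvx.symm
        have h1 : (G.neighborFinset x \ {v}).card = G.degree x - 1 := by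
          rw [card_sdiff_of_subset (by simpa using hv), card_singleton,
            SimpleGraph.card_neighborFinset_eq_degree]
        have hd1 : 1 ≤ G.degree x := by
          rw [← SimpleGraph.card_neighborFinset_eq_degree]
          exact card_pos.2 ⟨v, hv⟩
        have h2 : (insert x (G.neighborFinset x \ {v})).card ≤ G.degree x := by
          refine (card_insert_le _ _).trans ?_
          omega
        exact h2.trans (le_sup (f := fun x => G.degree x) (mem_insert_of_mem hx))
    _ = G.degree v * D G v := by
        rw [sum_const, smul_eq_mul, SimpleGraph.card_neighborFinset_eq_degree]
    _ ≤ D G v * D G v :=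
        Nat.mul_le_mul_right _ (le_sup (f := fun x => G.degree x) (mem_insert_self _ _))
    _ = D G v ^ 2 := (sq _).symm

lemma free_nonempty (m : ℕ) (F : Finset ℕ) (hF : F.card ≤ m) :
    (Finset.Icc 1 (m + 1) \ F).Nonempty := by
  rw [← card_pos]
  have h1 : (Finset.Icc 1 (m + 1)).card = m + 1 := by simp
  have h2 := Finset.le_card_sdiff F (Finset.Icc 1 (m + 1))
  omega

def col (e : V ≃ Fin (Fintype.card V)) : ℕ → ℕ
  | i =>
    if h : i < Fintype.card V then
      (Finset.Icc 1 (D G (e.symm ⟨i, h⟩) ^ 2 + 1) \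
        (((N2 G (e.symm ⟨i, h⟩)).filter fun u => (e u : ℕ) < i).attach.image
          (fun u => col e (e u.1)))).min'
        (free_nonempty _ _
          ((card_image_le).trans (by
            rw [card_attach]
            exact (card_filter_le _ _).trans (card_N2_le G (e.symm ⟨i, h⟩)))))
    else 1
  termination_by i => i
  decreasing_by
    all_goals exact (mem_filter.1 u.2).2

lemma col_spec (e : V ≃ Fin (Fintype.card V)) (i : ℕ) (h : i < Fintype.card V) :
    col G e i ∈ Finset.Icc 1 (D G (e.symm ⟨i, h⟩) ^ 2 + 1) \
      (((N2 G (e.symm ⟨i, h⟩)).filter fun u => (e u : ℕ) < i).attach.image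
        (fun u => col G e (e u.1))) := by
  rw [col]
  simp only [dif_pos h]
  exact min'_mem _ _

end Stmt1Aux

namespace Stmt1Aux

lemma col_forbidden {V : Type*} [Fintype V] [DecidableEq V] (G : SimpleGraph V)
    [DecidableRel G.Adj] (e : V ≃ Fin (Fintype.card V)) (i : ℕ) (h : i < Fintype.card V)
    (u : V) (hu : u ∈ N2 G (e.symm ⟨i, h⟩)) (hlt : (e u : ℕ) < i) :
    col G e (e u) ≠ col G e i := by
  have hs := col_spec G e i h
  rw [mem_sdiff] at hs
  intro heq
  exact hs.2 (mem_image.2 ⟨⟨u, mem_filter.2 ⟨hu, hlt⟩⟩, mem_attach _ _, heq⟩)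

end Stmt1Aux

/-- A proper distance-2 coloring exists using at each vertex `v` a color in the range
`[1, Δ v ^ 2 + 1]`, where `Δ v` is the maximum degree among `v` and its neighbors. -/
theorem stmt_1 {V : Type*} [Fintype V] [DecidableEq V] (G : SimpleGraph V)
    [DecidableRel G.Adj] :
    ∃ c : V → ℕ,
      (∀ v, 1 ≤ c v ∧ c v ≤ ((insert v (G.neighborFinset v)).sup (fun x => G.degree x)) ^ 2 + 1) ∧
      ∀ u w, u ≠ w → (G.Adj u w ∨ ∃ x, G.Adj u x ∧ G.Adj x w) → c u ≠ c w := by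
  classical
  set e := Fintype.equivFin V with he
  refine ⟨fun v => Stmt1Aux.col G e (e v), fun v => ?_, ?_⟩
  · have hs := Stmt1Aux.col_spec G e (e v) (e v).isLt
    rw [Finset.mem_sdiff, Finset.mem_Icc] at hs
    have hv : e.symm ⟨(e v : ℕ), (e v).isLt⟩ = v := by simp
    rw [hv] at hs
    exact hs.1
  · have key : ∀ u w : V, u ≠ w → (G.Adj u w ∨ ∃ x, G.Adj u x ∧ G.Adj x w) →
        (e u : ℕ) < (e w : ℕ) →
        Stmt1Aux.col G e (e u) ≠ Stmt1Aux.col G e (e w) := by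
      intro u w hne hR hlt
      have hmem : u ∈ Stmt1Aux.N2 G (e.symm ⟨(e w : ℕ), (e w).isLt⟩) := by
        have hw : e.symm ⟨(e w : ℕ), (e w).isLt⟩ = w := by simp
        rw [hw, Stmt1Aux.mem_N2]
        refine ⟨hne, ?_⟩
        rcases hR with hadj | ⟨x, h1, h2⟩
        · exact Or.inl hadj.symm
        · exact Or.inr ⟨x, h2.symm, h1.symm⟩
      exact Stmt1Aux.col_forbidden G e (e w) (e w).isLt u hmem hlt
    intro u w hne hR
    rcases lt_trichotomy ((e u : ℕ)) ((e w : ℕ)) with hlt | heq | hgt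
    · exact key u w hne hR hlt
    · exact absurd (e.injective (Fin.val_injective heq)) hne
    · have hR' : G.Adj w u ∨ ∃ x, G.Adj w x ∧ G.Adj x u := by
        rcases hR with hadj | ⟨x, h1, h2⟩
        · exact Or.inl hadj.symm
        · exact Or.inr ⟨x, h2.symm, h1.symm⟩
      exact fun heq => key w u hne.symm hR' hgt heq.symm
end

section
/- Uniqueness of identifiers yields cycle detection: if in a parent structure (each vertex has at most one parent) every vertex v satisfies m(v) = min({id(v)} ∪ {m(u) : u child of v}) with id injective, and some vertex v has a child u with m(u) = id(v), then v lies on a cycle of the parent relation. Conversely, in an acyclic parent structure, m(u) = id(v) for a child u of v is impossible. -/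
theorem aux7 {V : Type*} [Fintype V] (p : V → Option V) (idf : V → ℕ)
    (hinj : Function.Injective idf) (m : V → ℕ)
    (hm : ∀ v, m v = sInf ({idf v} ∪ {x | ∃ u, p u = some v ∧ m u = x}))
    (v u : V) (hpu : p u = some v) (hmu : m u = idf v) :
    Relation.TransGen (fun a b => p a = some b) v v := by
  classical
  have key : ∀ w, m w = idf v → w ≠ v → ∃ w', p w' = some w ∧ m w' = m w := by
    intro w hw hwv
    have hne : ({idf w} ∪ {x | ∃ u, p u = some w ∧ m u = x} : Set ℕ).Nonempty :=
      ⟨idf w, Or.inl rfl⟩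
    have hmem : m w ∈ ({idf w} ∪ {x | ∃ u, p u = some w ∧ m u = x} : Set ℕ) := by
      rw [hm w]; exact Nat.sInf_mem hne
    rcases hmem with h | ⟨u', hu', hmu'⟩
    · exact absurd (hinj ((Set.eq_of_mem_singleton h).symm.trans hw)) hwv
    · exact ⟨u', hu', hmu'⟩
  set f : V → V := fun w =>
    if h : ∃ w', p w' = some w ∧ m w' = m w then h.choose else w with hfdef
  have hf : ∀ w, m w = idf v → w ≠ v → p (f w) = some w ∧ m (f w) = m w := by
    intro w hw hwv
    have h := key w hw hwv
    simp only [hfdef, dif_pos h]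
    exact h.choose_spec
  have hexists : ∃ k, f^[k] u = v := by
    by_contra hno
    push_neg at hno
    have inv : ∀ k, m (f^[k] u) = idf v := by
      intro k
      induction k with
      | zero => simpa using hmu
      | succ k ih =>
        rw [Function.iterate_succ_apply']
        rw [(hf _ ih (hno k)).2, ih]
    have hstep : ∀ k, p (f^[k+1] u) = some (f^[k] u) := fun k => by
      rw [Function.iterate_succ_apply']; exact (hf _ (inv k) (hno k)).1
    obtain ⟨i, j, hij, heq⟩ : ∃ i j, i ≠ j ∧ f^[i] u = f^[j] u :=
      Finite.exists_ne_map_eq_of_infinite _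
    have back : ∀ i j, i ≤ j → f^[i] u = f^[j] u → u = f^[j - i] u := by
      intro i
      induction i with
      | zero => intro j _ h; simpa using h
      | succ i ih =>
        intro j hle h
        obtain ⟨j', rfl⟩ : ∃ j', j = j' + 1 := ⟨j - 1, by omega⟩
        have h1 := hstep i
        have h2 := hstep j'
        rw [h] at h1
        have h3 : f^[i] u = f^[j'] u := Option.some.inj (h1.symm.trans h2)
        have := ih j' (by omega) h3
        simpa [Nat.succ_sub_succ] using this
    wlog hlt : i < j generalizing i j
    · exact this j i hij.symm heq.symm (by omega)
    have hu2 : u = f^[j - i] u := back i j (le_of_lt hlt) heq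
    have hd : j - i - 1 + 1 = j - i := by omega
    have h4 := hstep (j - i - 1)
    rw [hd, ← hu2] at h4
    have : v = f^[j - i - 1] u := Option.some.inj (hpu.symm.trans h4)
    exact hno (j - i - 1) this.symm
  set k := Nat.find hexists with hk
  have hkv : f^[k] u = v := Nat.find_spec hexists
  have hmin : ∀ j < k, f^[j] u ≠ v := fun j hj => Nat.find_min hexists hj
  have inv : ∀ j ≤ k, m (f^[j] u) = idf v := by
    intro j
    induction j with
    | zero => intro _; simpa using hmu
    | succ j ih =>
      intro hle
      rw [Function.iterate_succ_apply']
      rw [(hf _ (ih (by omega)) (hmin j (by omega))).2, ih (by omega)]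
  have hstep : ∀ j, j + 1 ≤ k → p (f^[j+1] u) = some (f^[j] u) := fun j hj => by
    rw [Function.iterate_succ_apply']
    exact (hf _ (inv j (by omega)) (hmin j (by omega))).1
  have path : ∀ j ≤ k, Relation.ReflTransGen (fun a b => p a = some b) (f^[j] u) u := by
    intro j
    induction j with
    | zero => intro _; simpa using Relation.ReflTransGen.refl
    | succ j ih =>
      intro hle
      exact Relation.ReflTransGen.head (hstep j hle) (ih (by omega))
  have hpath : Relation.ReflTransGen (fun a b => p a = some b) v u := by
    have := path k le_rfl
    rwa [hkv] at this
  exact Relation.TransGen.tail' hpath hpu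

/-- Uniqueness of identifiers yields cycle detection: with `m` a fixpoint of
`m v = min({id v} ∪ {m u : u child of v})` and `id` injective, if some vertex `v` has a
child `u` with `m u = id v` then `v` lies on a cycle of the parent relation; conversely, in
an acyclic parent structure `m u = id v` for a child `u` of `v` is impossible. -/
theorem stmt_7 {V : Type*} [Fintype V] (p : V → Option V) (idf : V → ℕ)
    (hinj : Function.Injective idf) (m : V → ℕ)
    (hm : ∀ v, m v = sInf ({idf v} ∪ {x | ∃ u, p u = some v ∧ m u = x})) :
    (∀ v u, p u = some v → m u = idf v →
      Relation.TransGen (fun a b => p a = some b) v v) ∧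
    ((∀ x, ¬ Relation.TransGen (fun a b => p a = some b) x x) →
      ∀ v u, p u = some v → m u ≠ idf v) := by
  refine ⟨aux7 p idf hinj m hm, fun hacyc v u hpu hmu => ?_⟩
  exact hacyc v (aux7 p idf hinj m hm v u hpu hmu)
end

section
/- The invariant of fragment merging preserves acyclicity: let V be finite, and consider a parent function p that changes only by the following two operations: (Merge) a root v (p(v) undefined) sets p(v) := u for a vertex u that is not a descendant of v; (ReRoot) a root v sets p(v) := u where u is a child of v, and simultaneously u deletes its parent (p(u) becomes undefined). If the initial parent structure is acyclic, then after any sequence of such operations the parent structure remains acyclic. -/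
/-- One step of fragment merging: either a root `v` attaches to a vertex `u` that is not a
descendant of `v` (Merge), or a root `v` attaches to one of its children `u`, which
simultaneously deletes its parent pointer (ReRoot). -/
def Stmt9Move {V : Type*} [DecidableEq V] (p p' : V → Option V) : Prop :=
  (∃ v u, p v = none ∧ ¬ Relation.ReflTransGen (fun a b => p a = some b) u v ∧
      p' = Function.update p v (some u)) ∨
  (∃ v u, p v = none ∧ p u = some v ∧
      p' = fun w => if w = v then some u else if w = u then none else p w)

private lemma lemA {V : Type*} (r r' : V → V → Prop) (v u : V)
    (hsub : ∀ a b, r' a b → (a = v ∧ b = u) ∨ r a b)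
    (hrr' : ∀ a b, r a b → r' a b) :
    ∀ x y, Relation.TransGen r' x y →
      Relation.TransGen r x y ∨
        (Relation.ReflTransGen r' x v ∧ Relation.ReflTransGen r' u y) := by
  intro x y h
  induction h with
  | single h =>
    rcases hsub _ _ h with ⟨rfl, rfl⟩ | h
    · exact Or.inr ⟨Relation.ReflTransGen.refl, Relation.ReflTransGen.refl⟩
    · exact Or.inl (Relation.TransGen.single h)
  | tail hxb hby ih =>
    rcases hsub _ _ hby with ⟨rfl, rfl⟩ | hby'
    · rcases ih with hx | ⟨h1, h2⟩
      · exact Or.inr ⟨(Relation.TransGen.mono hrr' _ _ hx).to_reflTransGen, Relation.ReflTransGen.refl⟩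
      · exact Or.inr ⟨h1, Relation.ReflTransGen.refl⟩
    · rcases ih with hx | ⟨h1, h2⟩
      · exact Or.inl (hx.tail hby')
      · exact Or.inr ⟨h1, h2.tail hby⟩

private lemma lemB {V : Type*} (r r' : V → V → Prop) (v : V)
    (h : ∀ a b, a ≠ v → r' a b → r a b) :
    ∀ a, Relation.ReflTransGen r' a v → Relation.ReflTransGen r a v := by
  intro a ha
  induction ha using Relation.ReflTransGen.head_induction_on with
  | refl => exact Relation.ReflTransGen.refl
  | head hab _ ih =>
    rename_i a' b' _
    by_cases hav : a' = v
    · subst hav; exact Relation.ReflTransGen.refl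
    · exact Relation.ReflTransGen.head (h _ _ hav hab) ih

private lemma step_acyclic {V : Type*} [DecidableEq V] (p p' : V → Option V)
    (hm : Stmt9Move p p')
    (h : ∀ x, ¬ Relation.TransGen (fun a b => p a = some b) x x) :
    ∀ x, ¬ Relation.TransGen (fun a b => p' a = some b) x x := by
  rcases hm with ⟨v, u, hv, hnd, hp'⟩ | ⟨v, u, hv, hu, hp'⟩
  · -- Merge
    set r : V → V → Prop := fun a b => p a = some b with hr
    set r' : V → V → Prop := fun a b => p' a = some b with hr'
    have hsub : ∀ a b, r' a b → (a = v ∧ b = u) ∨ r a b := by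
      intro a b hab
      have hab' : Function.update p v (some u) a = some b := by rw [← hp']; exact hab
      rw [Function.update_apply] at hab'
      split_ifs at hab' with hav
      · exact Or.inl ⟨hav, (Option.some_inj.mp hab').symm⟩
      · exact Or.inr hab'
    have hnov : ∀ b, ¬ r v b := by
      intro b hb
      have : p v = some b := hb
      rw [hv] at this; exact absurd this (by simp)
    have hrr' : ∀ a b, r a b → r' a b := by
      intro a b hab
      have hav : a ≠ v := fun h' => hnov b (h' ▸ hab)
      show p' a = some b
      rw [hp', Function.update_apply, if_neg hav]; exact hab
    intro x hx
    rcases lemA r r' v u hsub hrr' x x hx with hc | ⟨h1, h2⟩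
    · exact h x hc
    · have huvr : Relation.ReflTransGen r' u v := h2.trans h1
      have : Relation.ReflTransGen r u v := by
        refine lemB r r' v ?_ u huvr
        intro a b hav hab
        show p a = some b
        have : p' a = some b := hab
        rwa [hp', Function.update_apply, if_neg hav] at this
      exact hnd this
  · -- ReRoot
    set r : V → V → Prop := fun a b => p a = some b with hr
    set r' : V → V → Prop := fun a b => p' a = some b with hr'
    have huv : u ≠ v := by
      intro h'; subst h'; rw [hv] at hu; exact absurd hu (by simp)
    set r'' : V → V → Prop := fun a b => a ≠ u ∧ p a = some b with hrpp
    have hsub : ∀ a b, r' a b → (a = v ∧ b = u) ∨ r'' a b := by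
      intro a b hab
      have hab' : (if a = v then some u else if a = u then none else p a) = some b := by
        rw [← congrFun hp' a]; exact hab
      split_ifs at hab' with hav hau
      · exact Or.inl ⟨hav, (Option.some_inj.mp hab').symm⟩
      · exact Or.inr ⟨hau, hab'⟩
    have hrr' : ∀ a b, r'' a b → r' a b := by
      rintro a b ⟨hau, hab⟩
      have hav : a ≠ v := by
        intro h'; subst h'; rw [hv] at hab; exact absurd hab (by simp)
      show p' a = some b
      rw [hp']; simp only [if_neg hav, if_neg hau]; exact hab
    intro x hx
    rcases lemA r'' r' v u hsub hrr' x x hx with hc | ⟨h1, h2⟩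
    · exact h x (Relation.TransGen.mono (fun (a b : V) (hab : r'' a b) => hab.2) _ _ hc)
    · have huvr : Relation.ReflTransGen r' u v := h2.trans h1
      rcases (Relation.reflTransGen_iff_eq_or_transGen.mp huvr) with he | ht
      · exact huv he.symm
      · obtain ⟨b, hub, -⟩ := Relation.TransGen.head'_iff.mp ht
        have : p' u = some b := hub
        rw [hp'] at this
        simp only [if_neg huv, if_pos rfl] at this
        exact absurd this (by simp)

/-- If the initial parent structure is acyclic, then after any sequence of Merge/ReRoot
operations it remains acyclic. -/
theorem stmt_9 {V : Type*} [Fintype V] [DecidableEq V] (p₀ p₁ : V → Option V)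
    (h₀ : ∀ x, ¬ Relation.TransGen (fun a b => p₀ a = some b) x x)
    (hsteps : Relation.ReflTransGen Stmt9Move p₀ p₁) :
    ∀ x, ¬ Relation.TransGen (fun a b => p₁ a = some b) x x := by
  induction hsteps with
  | refl => exact h₀
  | tail _ hmove ih => exact step_acyclic _ _ hmove ih
end

section
/- In the distance-2 coloring conflict-resolution scheme, at any configuration with at least one color conflict, the set of 'player' nodes is nonempty and disjoint from the set of 'relay' nodes: no node v can simultaneously satisfy Player(v) and Relay(v), and if some two vertices at distance ≤ 2 share a color then some vertex is a player. -/
open scoped ENat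

/-- The closed neighborhood of `v`. -/
def cNbr {V : Type*} [Fintype V] [DecidableEq V] (G : SimpleGraph V) [DecidableRel G.Adj]
    (v : V) : Finset V :=
  insert v (G.neighborFinset v)

/-- `minConf G c v` is the minimum color in conflict seen by `v` (as `ℕ∞`, `⊤` if none):
the least `c u` over pairs `u ≠ w` in `N[v]` with `c u = c w`. -/
noncomputable def minConf {V : Type*} [Fintype V] [DecidableEq V] (G : SimpleGraph V)
    [DecidableRel G.Adj] (c : V → ℕ) (v : V) : ℕ∞ :=
  sInf {x : ℕ∞ | ∃ u ∈ cNbr G v, ∃ w ∈ cNbr G v, u ≠ w ∧ c u = c w ∧ x = (c u : ℕ∞)}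

/-- `v` is a player if its color is the minimum conflict color advertised in `N[v]`. -/
def isPlayer {V : Type*} [Fintype V] [DecidableEq V] (G : SimpleGraph V)
    [DecidableRel G.Adj] (c : V → ℕ) (v : V) : Prop :=
  (c v : ℕ∞) = sInf {x : ℕ∞ | ∃ u ∈ cNbr G v, x = minConf G c u}

/-- `v` is a relay if it does not hold the minimum conflict color, yet this minimum is the
least advertised in `N[v]` and at least two of `v`'s neighbors carry it. -/
def isRelay {V : Type*} [Fintype V] [DecidableEq V] (G : SimpleGraph V)
    [DecidableRel G.Adj] (c : V → ℕ) (v : V) : Prop :=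
  minConf G c v ≠ (c v : ℕ∞) ∧
  minConf G c v = sInf {x : ℕ∞ | ∃ u ∈ cNbr G v, x = minConf G c u} ∧
  ∃ u ∈ G.neighborFinset v, ∃ w ∈ G.neighborFinset v, u ≠ w ∧
    (c u : ℕ∞) = minConf G c v ∧ (c w : ℕ∞) = minConf G c v

/-- No node is simultaneously a player and a relay, and whenever two vertices at distance
at most two share a color, some vertex is a player. -/
theorem stmt_15 {V : Type*} [Fintype V] [DecidableEq V] (G : SimpleGraph V)
    [DecidableRel G.Adj] (c : V → ℕ) :
    (∀ v, ¬ (isPlayer G c v ∧ isRelay G c v)) ∧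
    ((∃ a b, a ≠ b ∧ (G.Adj a b ∨ ∃ x, G.Adj a x ∧ G.Adj x b) ∧ c a = c b) →
      ∃ v, isPlayer G c v) := by
  constructor
  · rintro v ⟨hp, hr⟩
    exact hr.1 (hr.2.1.trans hp.symm)
  · rintro ⟨a, b, hab, hpath, hcab⟩
    set A : Set ℕ∞ :=
      {x | ∃ v, ∃ u ∈ cNbr G v, ∃ w ∈ cNbr G v, u ≠ w ∧ c u = c w ∧ x = (c u : ℕ∞)} with hAdef
    have hA : A.Nonempty := by
      rcases hpath with h | ⟨x, hax, hxb⟩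
      · exact ⟨c a, a, a, by simp [cNbr], b, by simp [cNbr, h], hab, hcab, rfl⟩
      · exact ⟨c a, x, a, by simp [cNbr, hax.symm], b, by simp [cNbr, hxb], hab, hcab, rfl⟩
    obtain ⟨x, u, hu, w, hw, huw, hcuw, hcu⟩ := csInf_mem hA
    refine ⟨u, ?_⟩
    have hle : ∀ t, sInf A ≤ minConf G c t := by
      intro t
      apply le_sInf
      rintro y ⟨p, hp, q, hq, hpq, hcpq, rfl⟩
      exact sInf_le ⟨t, p, hp, q, hq, hpq, hcpq, rfl⟩
    have hxu : x ∈ cNbr G u := by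
      simp only [cNbr, Finset.mem_insert, SimpleGraph.mem_neighborFinset] at hu ⊢
      rcases hu with rfl | h
      · exact Or.inl rfl
      · exact Or.inr h.symm
    have h1 : minConf G c x ≤ (c u : ℕ∞) := sInf_le ⟨u, hu, w, hw, huw, hcuw, rfl⟩
    have h2 : sInf {y : ℕ∞ | ∃ t ∈ cNbr G u, y = minConf G c t} ≤ minConf G c x :=
      sInf_le ⟨x, hxu, rfl⟩
    have h3 : sInf A ≤ sInf {y : ℕ∞ | ∃ t ∈ cNbr G u, y = minConf G c t} := by
      apply le_sInf
      rintro y ⟨t, ht, rfl⟩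
      exact hle t
    exact le_antisymm (hcu ▸ h3) (h2.trans h1)
end

section
/- If each vertex v in a parent structure keeps a record E(v) of the previously seen minimum and a node may only adopt a child's minimum value m(k(v)) when E(v) ≠ m(k(v)), then each vertex adopts each specific value at most a bounded number of times between two resets; consequently, in an acyclic structure of n nodes with values from a finite set of size N, the total number of Min-adoption steps in any execution is finite (the potential Ξ(γ) = (β(γ,0), ..., β(γ,N)) ordered lexicographically, with each β(γ,i) ≤ 4n, strictly decreases at each step). -/
/-- A step of the cycle-detection rules on a configuration `γ = (m, E)`: some node `v`
with a minimum-`m` child `u` executes (Min) if `m v > m u` and `E v ≠ m u`, adopting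
`m v := m u`; or (Start) if `m (p v) = m v = m u` and `E v ≠ m v`, setting `E v := m v`;
or (ID) if `E (p v) = E v = E u = m v` and `m v ≠ id v`, setting `m v := id v`. -/
def BreakStep {V : Type*} [DecidableEq V] (p : V → Option V) (N : ℕ)
    (idf : V → Fin (N + 1))
    (γ γ' : (V → Fin (N + 1)) × (V → Fin (N + 1))) : Prop :=
  ∃ v u, p u = some v ∧ (∀ w, p w = some v → γ.1 u ≤ γ.1 w) ∧
    ((γ.1 u < γ.1 v ∧ γ.2 v ≠ γ.1 u ∧
        γ' = (Function.update γ.1 v (γ.1 u), γ.2)) ∨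
     (∃ w, p v = some w ∧ γ.1 w = γ.1 v ∧ γ.1 v = γ.1 u ∧ γ.2 v ≠ γ.1 v ∧
        γ' = (γ.1, Function.update γ.2 v (γ.1 v))) ∨
     (∃ w, p v = some w ∧ γ.2 w = γ.2 v ∧ γ.2 v = γ.2 u ∧ γ.2 v = γ.1 v ∧
        γ.1 v ≠ idf v ∧ γ' = (Function.update γ.1 v (idf v), γ.2)))

/-- An eventually-nonincreasing sequence in `Fin (N+1)` is eventually constant. -/
private lemma ev_const {N : ℕ} (h : ℕ → Fin (N + 1)) (t0 : ℕ)
    (hd : ∀ t, t0 ≤ t → h (t + 1) ≤ h t) :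
    ∃ T, t0 ≤ T ∧ ∀ t, T ≤ t → h t = h T := by
  have hmono : ∀ s t, t0 ≤ s → s ≤ t → h t ≤ h s := by
    intro s t hs hst
    induction t, hst using Nat.le_induction with
    | base => exact le_rfl
    | succ n hn ih => exact (hd n (hs.trans hn)).trans ih
  have hne : ({n | ∃ t, t0 ≤ t ∧ (h t : ℕ) = n} : Set ℕ).Nonempty :=
    ⟨(h t0 : ℕ), t0, le_rfl, rfl⟩
  obtain ⟨t1, ht1, hval⟩ := Nat.sInf_mem hne
  refine ⟨t1, ht1, fun t ht => ?_⟩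
  have h1 : (h t : ℕ) ≤ (h t1 : ℕ) := hmono t1 t ht1 ht
  have h2 : sInf {n | ∃ t, t0 ≤ t ∧ (h t : ℕ) = n} ≤ (h t : ℕ) :=
    Nat.sInf_le ⟨t, ht1.trans ht, rfl⟩
  exact Fin.ext (by omega)

/-- Per-node analysis of a step: each node is either untouched, or performs Min,
Start, or ID with the corresponding constraints. -/
private lemma step_cases {V : Type*} [DecidableEq V] {p : V → Option V} {N : ℕ}
    {idf : V → Fin (N + 1)} {γ γ' : (V → Fin (N + 1)) × (V → Fin (N + 1))}
    (hst : BreakStep p N idf γ γ') (x : V) :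
    (γ'.1 x = γ.1 x ∧ γ'.2 x = γ.2 x) ∨
    (γ'.2 x = γ.2 x ∧ γ'.1 x < γ.1 x ∧ γ.2 x ≠ γ'.1 x) ∨
    (γ'.1 x = γ.1 x ∧ ∃ w, p x = some w ∧ γ.1 w = γ.1 x ∧ γ'.2 x = γ.1 x ∧ γ.2 x ≠ γ.1 x) ∨
    (γ'.2 x = γ.2 x ∧ (∃ w, p x = some w) ∧ γ.1 x = γ.2 x ∧ γ'.1 x ≠ γ.2 x) := by
  obtain ⟨v, u, hpu, hmin, hcase⟩ := hst
  by_cases hx : x = v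
  · subst hx
    rcases hcase with ⟨h1, h2, h3⟩ | ⟨w, hw, h1, h2, h3, h4⟩ | ⟨w, hw, h1, h2, h3, h4, h5⟩
    · right; left
      rw [h3]
      exact ⟨rfl, by simpa using h1, by simpa using h2⟩
    · right; right; left
      rw [h4]
      exact ⟨rfl, w, hw, h1, by simp, h3⟩
    · right; right; right
      rw [h5]
      refine ⟨rfl, ⟨w, hw⟩, h3.symm, ?_⟩
      simp only [Function.update_self]
      intro hc
      rw [h3] at hc
      exact h4 hc.symm
  · left
    rcases hcase with ⟨_, _, h3⟩ | ⟨w, _, _, _, _, h3⟩ | ⟨w, _, _, _, _, _, h3⟩ <;>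
      rw [h3] <;> refine ⟨?_, ?_⟩ <;> simp [Function.update_of_ne hx]

/-- Every step changes the configuration. -/
private lemma step_ne {V : Type*} [DecidableEq V] {p : V → Option V} {N : ℕ}
    {idf : V → Fin (N + 1)} {γ γ' : (V → Fin (N + 1)) × (V → Fin (N + 1))}
    (hst : BreakStep p N idf γ γ') : γ' ≠ γ := by
  intro heq
  obtain ⟨v, u, hpu, hmin, hcase⟩ := hst
  rcases hcase with ⟨h1, h2, h3⟩ | ⟨w, hw, h1, h2, h3, h4⟩ | ⟨w, hw, h1, h2, h3, h4, h5⟩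
  · have : γ.1 v = γ.1 u := by
      conv_lhs => rw [← heq, h3]
      simp [Function.update_self]
    exact absurd this.symm (ne_of_lt h1)
  · have : γ.2 v = γ.1 v := by
      conv_lhs => rw [← heq, h4]
      simp [Function.update_self]
    exact h3 this
  · have : γ.1 v = idf v := by
      conv_lhs => rw [← heq, h5]
      simp [Function.update_self]
    exact h4 this

/-- In an acyclic parent structure on `n` nodes with values from a finite range, there is
no infinite execution of the rules Min, Start, ID. -/
theorem stmt_17 {V : Type*} [Fintype V] [DecidableEq V] (p : V → Option V)
    (hacyc : ∀ x, ¬ Relation.TransGen (fun a b => p a = some b) x x)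
    (N : ℕ) (idf : V → Fin (N + 1))
    (f : ℕ → (V → Fin (N + 1)) × (V → Fin (N + 1)))
    (hsteps : ∀ n, BreakStep p N idf (f n) (f (n + 1))) : False := by
  -- well-foundedness of the "is parent of" relation
  have key : ∀ a b : V, Relation.TransGen (fun a b : V => p b = some a) a b →
      Relation.TransGen (fun a b : V => p a = some b) b a := by
    intro a b h
    induction h with
    | single h => exact .single h
    | tail _ h2 ih => exact .head h2 ih
  have hirr : ∀ x : V, ¬ Relation.TransGen (fun a b : V => p b = some a) x x :=
    fun x hx => hacyc x (key x x hx)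
  have htg : WellFounded (Relation.TransGen (fun a b : V => p b = some a)) := by
    haveI : IsTrans V (Relation.TransGen (fun a b : V => p b = some a)) := inferInstance
    haveI : IsIrrefl V (Relation.TransGen (fun a b : V => p b = some a)) := ⟨hirr⟩
    exact Finite.wellFounded_of_trans_of_irrefl _
  have hwf : WellFounded (fun a b : V => p b = some a) :=
    @Subrelation.wf V (Relation.TransGen fun a b : V => p b = some a)
      (fun a b : V => p b = some a) (fun h => Relation.TransGen.single h) htg
  -- every node eventually stabilizes
  have hall : ∀ v : V, ∃ T, ∀ t, T ≤ t →
      (f t).1 v = (f T).1 v ∧ (f t).2 v = (f T).2 v := by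
    intro v
    induction v using hwf.induction with
    | _ v ih =>
    cases hpv : p v with
    | none =>
      have hE : ∀ t, (f t).2 v = (f 0).2 v := by
        intro t
        induction t with
        | zero => rfl
        | succ n ihn =>
          rcases step_cases (hsteps n) v with ⟨_, h2⟩ | ⟨h2, _⟩ |
            ⟨_, w, hw, _⟩ | ⟨h2, _⟩
          · rw [h2, ihn]
          · rw [h2, ihn]
          · rw [hpv] at hw; cases hw
          · rw [h2, ihn]
      have hd : ∀ t, 0 ≤ t → (f (t + 1)).1 v ≤ (f t).1 v := by
        intro t _
        rcases step_cases (hsteps t) v with ⟨h1, _⟩ | ⟨_, h1, _⟩ |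
          ⟨h1, _⟩ | ⟨_, ⟨w, hw⟩, _⟩
        · exact le_of_eq h1
        · exact le_of_lt h1
        · exact le_of_eq h1
        · rw [hpv] at hw; cases hw
      obtain ⟨T, _, hT⟩ := ev_const (fun t => (f t).1 v) 0 hd
      exact ⟨T, fun t ht => ⟨hT t ht, (hE t).trans (hE T).symm⟩⟩
    | some w =>
      obtain ⟨T0, hT0⟩ := ih w hpv
      set a := (f T0).1 w with ha
      have hpw : ∀ t, T0 ≤ t → (f t).1 w = a := fun t ht => (hT0 t ht).1
      -- any E-change at time ≥ T0 produces value a and requires old value ≠ a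
      have hC : ∀ t, T0 ≤ t → (f (t + 1)).2 v ≠ (f t).2 v →
          (f (t + 1)).2 v = a ∧ (f t).2 v ≠ a := by
        intro t ht hne
        rcases step_cases (hsteps t) v with ⟨_, h2⟩ | ⟨h2, _⟩ |
          ⟨_, w', hw', hww, h2, h3⟩ | ⟨h2, _⟩
        · exact absurd h2 hne
        · exact absurd h2 hne
        · have hww' : w' = w := by rw [hpv] at hw'; exact (Option.some.injEq _ _ ▸ hw').symm
          subst hww'
          have hma : (f t).1 v = a := by rw [← hww, hpw t ht]
          refine ⟨by rw [h2, hma], by rw [← hma]; exact h3⟩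
        · exact absurd h2 hne
      -- E eventually constant
      have hEstab : ∃ T1, T0 ≤ T1 ∧ ∀ t, T1 ≤ t → (f t).2 v = (f T1).2 v := by
        by_cases hex : ∃ t, T0 ≤ t ∧ (f t).2 v = a
        · obtain ⟨t1, ht1, he⟩ := hex
          have hconst : ∀ t, t1 ≤ t → (f t).2 v = a := by
            intro t ht
            induction t, ht using Nat.le_induction with
            | base => exact he
            | succ n hn ihn =>
              by_cases hch : (f (n + 1)).2 v = (f n).2 v
              · rw [hch, ihn]
              · exact (hC n (ht1.trans hn) hch).1
          exact ⟨t1, ht1, fun t ht => by rw [hconst t ht, hconst t1 le_rfl]⟩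
        · refine ⟨T0, le_rfl, fun t ht => ?_⟩
          induction t, ht using Nat.le_induction with
          | base => rfl
          | succ n hn ihn =>
            by_cases hch : (f (n + 1)).2 v = (f n).2 v
            · rw [hch, ihn]
            · exact absurd ⟨n + 1, by omega, (hC n hn hch).1⟩ hex
      obtain ⟨T1, hT01, hE⟩ := hEstab
      set e := (f T1).2 v with he
      -- m-changes at time ≥ T1 give a value ≠ e, and strictly decrease if old ≠ e
      have hD : ∀ t, T1 ≤ t → (f (t + 1)).1 v ≠ (f t).1 v →
          (f (t + 1)).1 v ≠ e ∧ ((f t).1 v ≠ e → (f (t + 1)).1 v < (f t).1 v) := by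
        intro t ht hne
        have hEt : (f t).2 v = e := hE t ht
        rcases step_cases (hsteps t) v with ⟨h1, _⟩ | ⟨_, hlt, hne2⟩ |
          ⟨h1, _⟩ | ⟨_, _, heq, hne3⟩
        · exact absurd h1 hne
        · exact ⟨by rw [← hEt]; exact fun hc => hne2 hc.symm, fun _ => hlt⟩
        · exact absurd h1 hne
        · refine ⟨by rw [← hEt]; exact hne3, fun hme => absurd ?_ hme⟩
          rw [heq, hEt]
      by_cases hex : ∃ t, T1 ≤ t ∧ (f t).1 v ≠ e
      · obtain ⟨t2, ht2, hne0⟩ := hex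
        have hinv : ∀ t, t2 ≤ t → (f t).1 v ≠ e := by
          intro t ht
          induction t, ht using Nat.le_induction with
          | base => exact hne0
          | succ n hn ihn =>
            by_cases hch : (f (n + 1)).1 v = (f n).1 v
            · rw [hch]; exact ihn
            · exact (hD n (ht2.trans hn) hch).1
        have hd : ∀ t, t2 ≤ t → (f (t + 1)).1 v ≤ (f t).1 v := by
          intro t ht
          by_cases hch : (f (t + 1)).1 v = (f t).1 v
          · exact le_of_eq hch
          · exact le_of_lt ((hD t (ht2.trans ht) hch).2 (hinv t ht))
        obtain ⟨T, hTt2, hT⟩ := ev_const (fun t => (f t).1 v) t2 hd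
        refine ⟨T, fun t ht => ⟨hT t ht, ?_⟩⟩
        rw [hE t (ht2.trans (hTt2.trans ht)), hE T (ht2.trans hTt2)]
      · push_neg at hex
        refine ⟨T1, fun t ht => ⟨?_, hE t ht⟩⟩
        rw [hex t ht, hex T1 le_rfl]
  -- take a time after which everything is constant: contradiction
  choose Tf hTf using hall
  set T := Finset.univ.sup Tf with hTdef
  have hfeq : f (T + 1) = f T := by
    have keyv : ∀ v, (f (T + 1)).1 v = (f T).1 v ∧ (f (T + 1)).2 v = (f T).2 v := by
      intro v
      have hvT : Tf v ≤ T := Finset.le_sup (Finset.mem_univ v)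
      obtain ⟨h1, h2⟩ := hTf v (T + 1) (by omega)
      obtain ⟨h3, h4⟩ := hTf v T hvT
      exact ⟨h1.trans h3.symm, h2.trans h4.symm⟩
    refine Prod.ext ?_ ?_ <;> funext v
    · exact (keyv v).1
    · exact (keyv v).2
  exact step_ne (hsteps T) hfeq
end
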